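/- Let f : Z → ℝ ∪ {+∞} be proper, convex and norm lower semicontinuous, and assume inf_{w ∈ Z} ( f_z(w) + h(w) ) = 0 for every z ∈ Z. Then M_f is maximal monotone in Z. In particular, every strongly representable operator is maximal monotone. -/

import Mathlib

open NormedSpace

noncomputable section
set_option maxHeartbeats 1000000


/-- The coupling `c(x, x*) := ⟨x, x*⟩` on `Z := X × X*`. -/
def coup (X : Type*) [NormedAddCommGroup X] [NormedSpace ℝ X]
    (z : X × StrongDual ℝ X) : ℝ := z.2 z.1

/-- The coupling `c(u*, u**) := ⟨u*, u**⟩` on `Z* := X* × X**`. -/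
def coupS (X : Type*) [NormedAddCommGroup X] [NormedSpace ℝ X]
    (p : StrongDual ℝ X × StrongDual ℝ (StrongDual ℝ X)) : ℝ := p.2 p.1

/-- The Fenchel conjugate `f* : X* × X** → ℝ ∪ {±∞}` of `f : Z → ℝ ∪ {+∞}`. -/
def conjF (X : Type*) [NormedAddCommGroup X] [NormedSpace ℝ X]
    (f : X × StrongDual ℝ X → EReal) (p : StrongDual ℝ X × StrongDual ℝ (StrongDual ℝ X)) : EReal :=
  ⨆ z : X × StrongDual ℝ X, (((p.1 z.1 + p.2 z.2 : ℝ) : EReal) - f z)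

/-- `h(x, x*) := ‖x‖²/2 + ‖x*‖²/2`. -/
def hfun (X : Type*) [NormedAddCommGroup X] [NormedSpace ℝ X]
    (z : X × StrongDual ℝ X) : ℝ := ‖z.1‖ ^ 2 / 2 + ‖z.2‖ ^ 2 / 2

/-- `M_f := {z | f z = c z}`. -/
def Mset (X : Type*) [NormedAddCommGroup X] [NormedSpace ℝ X]
    (f : X × StrongDual ℝ X → EReal) : Set (X × StrongDual ℝ X) :=
  {z | f z = ((coup X z : ℝ) : EReal)}

/-- `M ⊆ Z` is monotone. -/
def IsMono (X : Type*) [NormedAddCommGroup X] [NormedSpace ℝ X]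
    (M : Set (X × StrongDual ℝ X)) : Prop :=
  ∀ z ∈ M, ∀ w ∈ M, 0 ≤ (z.2 - w.2) (z.1 - w.1)

/-- `M ⊆ Z` is maximal monotone. -/
def IsMaxMono (X : Type*) [NormedAddCommGroup X] [NormedSpace ℝ X]
    (M : Set (X × StrongDual ℝ X)) : Prop :=
  IsMono X M ∧ ∀ N, IsMono X N → M ⊆ N → N = M

/-- `f` is a member of `G_s(Z)`: proper, convex, `f ≥ c`, `f* ≥ c` on `X* × X**`, norm-lsc. -/
def memGs (X : Type*) [NormedAddCommGroup X] [NormedSpace ℝ X]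
    (f : X × StrongDual ℝ X → EReal) : Prop :=
  (∀ z, f z ≠ ⊥) ∧ (∃ z, f z ≠ ⊤) ∧
    Convex ℝ {p : (X × StrongDual ℝ X) × ℝ | f p.1 ≤ (p.2 : EReal)} ∧
    (∀ z, ((coup X z : ℝ) : EReal) ≤ f z) ∧
    (∀ p, ((coupS X p : ℝ) : EReal) ≤ conjF X f p) ∧
    LowerSemicontinuous f

section AuxA
variable {X : Type*} [NormedAddCommGroup X] [NormedSpace ℝ X]




lemma er_shift (x : EReal) (a b d : ℝ) :
    x - (a:EReal) + (b:EReal) + (d:EReal) = x + (((b+d-a : ℝ)):EReal) := by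
  induction x using EReal.rec <;> norm_cast; ring_nf

lemma er_add_le {x : EReal} {a b : ℝ} : x + (a:EReal) ≤ (b:EReal) ↔ x ≤ ((b-a:ℝ):EReal) := by
  induction x using EReal.rec with
  | bot => simp [← EReal.coe_sub]
  | top => simp [EReal.top_add_coe, ← EReal.coe_sub]
  | coe r => norm_cast; constructor <;> intro h <;> linarith

lemma er_add_lt {x : EReal} {a b : ℝ} : x + (a:EReal) < (b:EReal) ↔ x < ((b-a:ℝ):EReal) := by
  induction x using EReal.rec with
  | bot => simp [← EReal.coe_sub]
  | top => simp [EReal.top_add_coe, ← EReal.coe_sub]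
  | coe r => norm_cast; constructor <;> intro h <;> linarith

lemma er_le_add {x : EReal} {a b : ℝ} : (b:EReal) ≤ x + (a:EReal) ↔ ((b-a:ℝ):EReal) ≤ x := by
  induction x using EReal.rec with
  | bot => simp [← EReal.coe_sub]
  | top => simp [EReal.top_add_coe, ← EReal.coe_sub]
  | coe r => norm_cast; constructor <;> intro h <;> linarith

lemma coup_add (z w : X × StrongDual ℝ X) :
    coup X (z+w) = coup X z + z.2 w.1 + w.2 z.1 + coup X w := by
  simp [coup, Prod.fst_add, Prod.snd_add, map_add, ContinuousLinearMap.add_apply]; ring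

lemma coup_zero : coup X 0 = 0 := by simp [coup]

lemma hfun_zero : hfun X 0 = 0 := by simp [hfun]

lemma hfun_nonneg (w : X × StrongDual ℝ X) : 0 ≤ hfun X w := by
  have := sq_nonneg ‖w.1‖; have := sq_nonneg ‖w.2‖; simp [hfun]; positivity

lemma coup_abs_le (w : X × StrongDual ℝ X) : |coup X w| ≤ ‖w.1‖ * ‖w.2‖ := by
  have := w.2.le_opNorm w.1
  have : ‖w.2 w.1‖ ≤ ‖w.1‖ * ‖w.2‖ := by rw [mul_comm]; exact w.2.le_opNorm w.1
  simpa [coup, Real.norm_eq_abs] using this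

lemma coup_add_hfun_nonneg (w : X × StrongDual ℝ X) : 0 ≤ coup X w + hfun X w := by
  have h1 := coup_abs_le w
  have h2 : ‖w.1‖ * ‖w.2‖ ≤ hfun X w := by
    have := sq_nonneg (‖w.1‖ - ‖w.2‖); simp [hfun]; nlinarith
  have := abs_le.1 h1
  linarith [this.1]

lemma continuous_coup : Continuous (coup X) := by
  have : Continuous fun p : (X →L[ℝ] ℝ) × X => p.1 p.2 := isBoundedBilinearMap_apply.continuous
  exact this.comp (continuous_swap)


lemma er_real {x : EReal} {a b : ℝ} (h1 : (a:EReal) ≤ x) (h2 : x < (b:EReal)) :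
    ∃ t : ℝ, x = (t:EReal) ∧ a ≤ t ∧ t < b := by
  induction x using EReal.rec with
  | bot => exact absurd h1 (by simp)
  | top => exact absurd h2 (by simp)
  | coe r => exact ⟨r, rfl, by exact_mod_cast h1, by exact_mod_cast h2⟩

lemma er_between {a : ℝ} {x : EReal} (h : (a:EReal) < x) : ∃ b : ℝ, (a:EReal) < (b:EReal) ∧ (b:EReal) < x := by
  induction x using EReal.rec with
  | bot => exact absurd h (by simp)
  | top => exact ⟨a+1, by exact_mod_cast (by linarith : a < a+1), EReal.coe_lt_top _⟩
  | coe r => exact ⟨(a+r)/2, by exact_mod_cast (by linarith [(show a < r by exact_mod_cast h)] : a < (a+r)/2),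
      by exact_mod_cast (by linarith [(show a < r by exact_mod_cast h)] : (a+r)/2 < r)⟩

section Main
variable {X : Type*} [NormedAddCommGroup X] [NormedSpace ℝ X]
variable (f : X × StrongDual ℝ X → EReal)

/-- abbreviation for the hinf hypothesis -/
def HInf : Prop := ∀ z : X × StrongDual ℝ X,
      (⨅ w : X × StrongDual ℝ X,
        (f (z + w) - ((coup X (z + w) : ℝ) : EReal) + ((coup X w : ℝ) : EReal)
          + ((hfun X w : ℝ) : EReal))) = 0

variable {f}

lemma term_nonneg (hinf : HInf f) (z w : X × StrongDual ℝ X) :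
    0 ≤ f (z + w) - ((coup X (z + w) : ℝ) : EReal) + ((coup X w : ℝ) : EReal)
          + ((hfun X w : ℝ) : EReal) := by
  have := iInf_le (fun w => f (z + w) - ((coup X (z + w) : ℝ) : EReal) + ((coup X w : ℝ) : EReal)
          + ((hfun X w : ℝ) : EReal)) w
  rw [hinf z] at this; exact this

lemma fge (hinf : HInf f) (z : X × StrongDual ℝ X) : ((coup X z : ℝ) : EReal) ≤ f z := by
  have h0 := term_nonneg hinf z 0
  rw [add_zero, er_shift, coup_zero, hfun_zero] at h0
  have := er_le_add.1 (by exact_mod_cast h0 :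
    ((0:ℝ):EReal) ≤ f z + (((0:ℝ)+(0:ℝ)-coup X z : ℝ):EReal))
  convert this using 2; ring

lemma term_small (hinf : HInf f) (z : X × StrongDual ℝ X) {δ : ℝ} (hδ : 0 < δ) :
    ∃ w : X × StrongDual ℝ X, f (z + w) < ((coup X (z + w) + δ - coup X w - hfun X w : ℝ) : EReal) := by
  have h1 : (⨅ w : X × StrongDual ℝ X,
        (f (z + w) - ((coup X (z + w) : ℝ) : EReal) + ((coup X w : ℝ) : EReal)
          + ((hfun X w : ℝ) : EReal))) < ((δ:ℝ):EReal) := by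
    rw [hinf z]; exact_mod_cast hδ
  obtain ⟨w, hw⟩ := iInf_lt_iff.1 h1
  rw [er_shift] at hw
  refine ⟨w, ?_⟩
  have := er_add_lt.1 hw
  convert this using 2; ring


end Main
end AuxA
section AuxB
variable {X : Type*} [NormedAddCommGroup X] [NormedSpace ℝ X]
variable {f : X × StrongDual ℝ X → EReal}

lemma coup_smul (a : ℝ) (w : X × StrongDual ℝ X) : coup X (a • w) = a^2 * coup X w := by
  simp [coup, Prod.smul_fst, Prod.smul_snd, ContinuousLinearMap.smul_apply, map_smul]; ring

lemma sqrt_norm_le {x s : ℝ} (hs : 0 ≤ s) (hx : 0 ≤ x) (h : x^2/2 ≤ 2*s) : x ≤ 2*Real.sqrt s := by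
  have h1 : x^2 ≤ (2*Real.sqrt s)^2 := by
    rw [mul_pow, Real.sq_sqrt hs]; linarith
  have h2 : 0 ≤ 2*Real.sqrt s := by positivity
  nlinarith

lemma step (hconv : Convex ℝ {p : (X × StrongDual ℝ X) × ℝ | f p.1 ≤ ((p.2 : ℝ) : EReal)})
    (hinf : HInf f) {z : X × StrongDual ℝ X} {ε δ : ℝ} (hε : 0 ≤ ε) (hδ : 0 < δ)
    (hz : f z ≤ ((coup X z + ε : ℝ) : EReal)) :
    ∃ w : X × StrongDual ℝ X, ‖w.1‖ ≤ 2*Real.sqrt (ε+δ) ∧ ‖w.2‖ ≤ 2*Real.sqrt (ε+δ) ∧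
      f (z+w) ≤ ((coup X (z+w) + δ : ℝ) : EReal) := by
  obtain ⟨w, hw⟩ := term_small hinf z hδ
  have hge := fge hinf (z + w)
  obtain ⟨t, hteq, htge, htlt⟩ := er_real hge hw
  -- memberships in the epigraph
  have m1 : (z, coup X z + ε) ∈ {p : (X × StrongDual ℝ X) × ℝ | f p.1 ≤ ((p.2 : ℝ) : EReal)} := hz
  have m2 : (z + w, t) ∈ {p : (X × StrongDual ℝ X) × ℝ | f p.1 ≤ ((p.2 : ℝ) : EReal)} := le_of_eq hteq
  have mmid := hconv m1 m2 (by norm_num : (0:ℝ) ≤ 1/2) (by norm_num : (0:ℝ) ≤ 1/2) (by norm_num)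
  have key : ((1/2:ℝ) • ((z, coup X z + ε) : (X × StrongDual ℝ X) × ℝ)
      + (1/2:ℝ) • ((z+w, t) : (X × StrongDual ℝ X) × ℝ))
      = ((z + (1/2:ℝ)•w, 1/2*(coup X z + ε) + 1/2*t) : (X × StrongDual ℝ X) × ℝ) := by
    refine Prod.ext ?_ ?_
    · simp only [Prod.fst_add, Prod.smul_fst]; module
    · simp only [Prod.snd_add, Prod.smul_snd, smul_eq_mul]; try ring
  rw [key] at mmid
  have mmid' : f (z + (1/2:ℝ) • w) ≤ (((1/2) * (coup X z + ε) + (1/2) * t : ℝ) : EReal) := mmid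
  have hgemid := (fge hinf (z + (1/2:ℝ) • w)).trans mmid'
  have hmidreal : coup X (z + (1/2:ℝ) • w) ≤ (1/2) * (coup X z + ε) + (1/2) * t := by
    exact_mod_cast hgemid
  -- expand couplings
  have e1 : coup X (z + (1/2:ℝ) • w)
      = coup X z + (1/2) * (z.2 w.1) + (1/2) * (w.2 z.1) + (1/4) * coup X w := by
    rw [coup_add, coup_smul]
    simp only [Prod.smul_fst, Prod.smul_snd, map_smul, ContinuousLinearMap.smul_apply,
      smul_eq_mul]
    ring
  have e2 : coup X (z + w) = coup X z + z.2 w.1 + w.2 z.1 + coup X w := coup_add z w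
  have hch := coup_add_hfun_nonneg w
  -- real arithmetic
  have hA : t < coup X (z + w) + δ - coup X w - hfun X w := htlt
  have hhw : hfun X w ≤ 2*(ε+δ) := by rw [e1] at hmidreal; rw [e2] at hA; nlinarith
  have ht2 : t ≤ coup X (z + w) + δ := by linarith
  have hb1 : ‖w.1‖ ≤ 2*Real.sqrt (ε+δ) := by
    refine sqrt_norm_le (by linarith) (norm_nonneg _) ?_
    have := sq_nonneg ‖w.2‖; simp [hfun] at hhw; nlinarith
  have hb2 : ‖w.2‖ ≤ 2*Real.sqrt (ε+δ) := by
    refine sqrt_norm_le (by linarith) (norm_nonneg _) ?_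
    have := sq_nonneg ‖w.1‖; simp [hfun] at hhw; nlinarith
  exact ⟨w, hb1, hb2, by rw [hteq]; exact_mod_cast ht2⟩

open Filter Topology in
lemma reach (hconv : Convex ℝ {p : (X × StrongDual ℝ X) × ℝ | f p.1 ≤ ((p.2:ℝ):EReal)})
    (hlsc : LowerSemicontinuous f) (hinf : HInf f) [CompleteSpace X]
    {z : X × StrongDual ℝ X} {ε : ℝ} (hε : 0 < ε)
    (hz : f z ≤ ((coup X z + ε : ℝ) : EReal)) :
    ∃ z' : X × StrongDual ℝ X, f z' = ((coup X z' : ℝ):EReal) ∧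
      ‖z'.1 - z.1‖ ≤ 6*Real.sqrt ε ∧ ‖z'.2 - z.2‖ ≤ 6*Real.sqrt ε := by
  classical
  set C := 3*Real.sqrt ε with hCdef
  -- bound on step sizes
  have hb : ∀ n:ℕ, 2*Real.sqrt (ε/4^n + ε/4^(n+1)) ≤ C * (1/2)^n := by
    intro n
    have h4 : ((4:ℝ))^n = ((2:ℝ)^n)^2 := by
      rw [show (4:ℝ)=2^2 by norm_num, ← pow_mul, mul_comm, pow_mul]
    have hp2 : (0:ℝ) < 2^n := by positivity
    have h1 : ε/4^n + ε/4^(n+1) ≤ ((3/2)*Real.sqrt ε/2^n)^2 := by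
      have h5 : ((3/2)*Real.sqrt ε/2^n)^2 = (9/4)*ε/((2:ℝ)^n)^2 := by
        rw [div_pow, mul_pow, Real.sq_sqrt hε.le]; ring
      rw [h5, ← h4]
      have h6 : (4:ℝ)^(n+1) = 4 * 4^n := by rw [pow_succ]; ring
      have hp4 : (0:ℝ) < 4^n := by positivity
      rw [h6]
      rw [div_add_div _ _ (ne_of_gt hp4) (by positivity), div_le_div_iff₀ (by positivity) hp4]
      nlinarith [mul_pos (mul_pos hε hp4) hp4]
    have h2 := Real.sqrt_le_sqrt h1
    rw [Real.sqrt_sq (by positivity)] at h2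
    calc 2*Real.sqrt (ε/4^n + ε/4^(n+1)) ≤ 2*((3/2)*Real.sqrt ε/2^n) := by linarith
    _ = C * (1/2)^n := by rw [hCdef]; field_simp; rw [← mul_pow]; norm_num
  have hstep : ∀ n:ℕ, ∀ y : X × StrongDual ℝ X, f y ≤ ((coup X y + ε/4^n :ℝ):EReal) →
      ∃ w : X × StrongDual ℝ X, ‖w.1‖ ≤ C*(1/2)^n ∧ ‖w.2‖ ≤ C*(1/2)^n ∧
        f (y+w) ≤ ((coup X (y+w) + ε/4^(n+1) : ℝ):EReal) := by
    intro n y hy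
    obtain ⟨w, h1, h2, h3⟩ := step hconv hinf (by positivity) (by positivity : (0:ℝ) < ε/4^(n+1)) hy
    exact ⟨w, h1.trans (hb n), h2.trans (hb n), h3⟩
  let nxt : ℕ → (X × StrongDual ℝ X) → (X × StrongDual ℝ X) := fun n y =>
    if h : f y ≤ ((coup X y + ε/4^n :ℝ):EReal) then y + Classical.choose (hstep n y h) else y
  let F : ℕ → X × StrongDual ℝ X := fun n => Nat.rec z (fun n acc => nxt n acc) n
  have hF0 : F 0 = z := rfl
  have hFs : ∀ n, F (n+1) = nxt n (F n) := fun n => rfl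
  have hinv : ∀ n, f (F n) ≤ ((coup X (F n) + ε/4^n :ℝ):EReal) := by
    intro n; induction n with
    | zero => rw [hF0]; simpa using hz
    | succ n ih =>
      have : F (n+1) = F n + Classical.choose (hstep n (F n) ih) := by
        rw [hFs n]; simp only [nxt, dif_pos ih]
      rw [this]
      exact (Classical.choose_spec (hstep n (F n) ih)).2.2
  have hd : ∀ n, dist (F n) (F (n+1)) ≤ C * (1/2)^n := by
    intro n
    have hw := Classical.choose_spec (hstep n (F n) (hinv n))
    have hs : F (n+1) = F n + Classical.choose (hstep n (F n) (hinv n)) := by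
      rw [hFs n]; simp only [nxt, dif_pos (hinv n)]
    rw [hs, dist_self_add_right, Prod.norm_def]
    exact max_le hw.1 hw.2.1
  have hcauchy := cauchySeq_of_le_geometric (1/2) C (by norm_num) hd
  obtain ⟨a, ha⟩ := cauchySeq_tendsto_of_complete hcauchy
  have hdist := dist_le_of_le_geometric_of_tendsto₀ (1/2) C (by norm_num) hd ha
  have hdist' : dist z a ≤ 6*Real.sqrt ε := by
    have : C / (1 - 1/2) = 6*Real.sqrt ε := by rw [hCdef]; ring
    rw [← this]; exact hF0 ▸ hdist
  have hmem : f a ≤ ((coup X a : ℝ):EReal) := by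
    by_contra hlt
    obtain ⟨y, hy1, hy2⟩ := er_between (lt_of_not_ge hlt)
    have hev1 : ∀ᶠ n in atTop, ((y:ℝ):EReal) < f (F n) := ha.eventually (hlsc a _ hy2)
    have hc : Tendsto (fun n => coup X (F n) + ε/4^n) atTop (𝓝 (coup X a + 0)) := by
      refine Tendsto.add ((continuous_coup.tendsto a).comp ha) ?_
      have : Tendsto (fun n:ℕ => ε * (1/4)^n) atTop (𝓝 (ε * 0)) :=
        (tendsto_pow_atTop_nhds_zero_of_lt_one (by norm_num) (by norm_num)).const_mul ε
      simpa [div_eq_mul_inv, ← inv_pow] using this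
    have hy1' : coup X a + 0 < y := by simpa using (by exact_mod_cast hy1 : coup X a < y)
    have hev2 : ∀ᶠ n in atTop, coup X (F n) + ε/4^n < y := hc.eventually (Filter.Tendsto.eventually_lt_const hy1' tendsto_id) |>.mono (fun n h => h)
    obtain ⟨n, h1, h2⟩ := (hev1.and hev2).exists
    have := h1.trans_le (hinv n)
    have : (y:ℝ) < coup X (F n) + ε/4^n := by exact_mod_cast this
    linarith
  refine ⟨a, le_antisymm hmem (fge hinf a), ?_, ?_⟩
  · have h1 : dist z.1 a.1 ≤ dist z a := by rw [Prod.dist_eq]; exact le_max_left _ _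
    rw [show a.1 - z.1 = a.1 - z.1 from rfl, ← dist_eq_norm, dist_comm]
    exact h1.trans hdist'
  · have h2 : dist z.2 a.2 ≤ dist z a := by rw [Prod.dist_eq]; exact le_max_right _ _
    rw [← dist_eq_norm, dist_comm]
    exact h2.trans hdist'

end AuxB
section AuxC
open Filter Topology
variable {X : Type*} [NormedAddCommGroup X] [NormedSpace ℝ X]
variable {f : X × StrongDual ℝ X → EReal}


lemma habs (g : StrongDual ℝ X) (x : X) : -(‖g‖*‖x‖) ≤ g x := by
  have h1 : |g x| ≤ ‖g‖*‖x‖ := by rw [← Real.norm_eq_abs]; exact g.le_opNorm x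
  linarith [(abs_le.1 h1).1]

lemma habs' (g : StrongDual ℝ X) (x : X) : g x ≤ ‖g‖*‖x‖ := by
  have h1 : |g x| ≤ ‖g‖*‖x‖ := by rw [← Real.norm_eq_abs]; exact g.le_opNorm x
  linarith [(abs_le.1 h1).2]


lemma amgm6 (s q : ℝ) : 6*s*q ≤ q^2/2 + 18*s^2 := by nlinarith [sq_nonneg (q - 6*s)]

lemma quad_bound {x s : ℝ} (hx : 0 ≤ x) (hs : 0 ≤ s) (h : x^2 ≤ 110*s^2 + 12*s*x) :
    x ≤ 20*s := by
  nlinarith [sq_nonneg (x - 20*s), mul_nonneg hx hs, mul_nonneg hs hs]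

lemma approx (hconv : Convex ℝ {p : (X × StrongDual ℝ X) × ℝ | f p.1 ≤ ((p.2:ℝ):EReal)})
    (hlsc : LowerSemicontinuous f) (hinf : HInf f) [CompleteSpace X]
    (z0 : X × StrongDual ℝ X)
    (hrel : ∀ w ∈ Mset X f, 0 ≤ (z0.2 - w.2) (z0.1 - w.1)) {δ : ℝ} (hδ : 0 < δ) :
    ∃ w : X × StrongDual ℝ X, ‖w.1‖ ≤ 20*Real.sqrt δ ∧ ‖w.2‖ ≤ 20*Real.sqrt δ ∧
      f (z0+w) ≤ ((coup X (z0+w) + δ : ℝ) : EReal) := by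
  obtain ⟨w, hw⟩ := term_small hinf z0 hδ
  have hge := fge hinf (z0+w)
  obtain ⟨t, hteq, htge, htlt⟩ := er_real hge hw
  have hch : coup X w + hfun X w < δ := by linarith
  have hf2 : f (z0+w) ≤ ((coup X (z0+w) + δ :ℝ):EReal) := by
    rw [hteq]
    exact_mod_cast (by linarith [coup_add_hfun_nonneg w] : t ≤ coup X (z0+w) + δ)
  obtain ⟨z', hz'mem, hz'1, hz'2⟩ := reach hconv hlsc hinf hδ hf2
  have hrel' := hrel z' hz'mem
  set e1 : X := z'.1 - (z0+w).1 with he1def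
  set e2 : StrongDual ℝ X := z'.2 - (z0+w).2 with he2def
  have he1 : ‖e1‖ ≤ 6*Real.sqrt δ := hz'1
  have he2 : ‖e2‖ ≤ 6*Real.sqrt δ := hz'2
  have hz1' : z'.1 = z0.1 + w.1 + e1 := by rw [he1def]; simp [Prod.fst_add]
  have hz2' : z'.2 = z0.2 + w.2 + e2 := by rw [he2def]; simp [Prod.snd_add]
  have key : (z0.2 - z'.2) (z0.1 - z'.1)
      = w.2 w.1 + w.2 e1 + e2 w.1 + e2 e1 := by
    rw [hz1', hz2']
    simp only [ContinuousLinearMap.sub_apply, ContinuousLinearMap.add_apply, map_add, map_sub,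
      ContinuousLinearMap.neg_apply, map_neg]
    ring
  rw [key] at hrel'
  set s := Real.sqrt δ with hsdef
  have hs : 0 ≤ s := Real.sqrt_nonneg δ
  have hs2 : s^2 = δ := Real.sq_sqrt hδ.le
  set p := ‖w.1‖ with hpdef
  set q := ‖w.2‖ with hqdef
  have hp : 0 ≤ p := norm_nonneg _
  have hq : 0 ≤ q := norm_nonneg _
  have b1 : w.2 e1 ≤ q*(6*s) := by
    have h0 := habs' w.2 e1
    have h2 : q*‖e1‖ ≤ q*(6*s) := mul_le_mul_of_nonneg_left he1 hq
    linarith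
  have b2 : e2 w.1 ≤ (6*s)*p := by
    have h0 := habs' e2 w.1
    have h2 : ‖e2‖*p ≤ (6*s)*p := mul_le_mul_of_nonneg_right he2 hp
    linarith
  have b3 : e2 e1 ≤ (6*s)*(6*s) := by
    have h0 := habs' e2 e1
    have h2 : ‖e2‖*‖e1‖ ≤ (6*s)*(6*s) := mul_le_mul he2 he1 (norm_nonneg _) (by positivity)
    linarith
  have hch' : w.2 w.1 + (p^2/2 + q^2/2) < δ := by
    have e : coup X w = w.2 w.1 := rfl
    have e2' : hfun X w = p^2/2 + q^2/2 := rfl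
    rw [e, e2'] at hch; linarith
  have hc0low : -(q*(6*s) + (6*s)*p + (6*s)*(6*s)) ≤ w.2 w.1 := by linarith
  have hhw : p^2/2 + q^2/2 ≤ 37*s^2 + 6*s*(p+q) := by nlinarith
  have hpb : p ≤ 20*s := by
    refine quad_bound hp hs ?_
    have hq6 := amgm6 s q
    linarith
  have hqb : q ≤ 20*s := by
    refine quad_bound hq hs ?_
    have hp6 := amgm6 s p
    linarith
  exact ⟨w, hpb, hqb, hf2⟩

lemma keyA [CompleteSpace X]
    (hconv : Convex ℝ {p : (X × StrongDual ℝ X) × ℝ | f p.1 ≤ ((p.2:ℝ):EReal)})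
    (hlsc : LowerSemicontinuous f) (hinf : HInf f) :
    IsMaxMono X (Mset X f) := by
  have hmono : IsMono X (Mset X f) := by
    intro z hz w hw
    have m1 : (z, coup X z) ∈ {p : (X × StrongDual ℝ X) × ℝ | f p.1 ≤ ((p.2:ℝ):EReal)} := le_of_eq hz
    have m2 : (w, coup X w) ∈ {p : (X × StrongDual ℝ X) × ℝ | f p.1 ≤ ((p.2:ℝ):EReal)} := le_of_eq hw
    have mmid := hconv m1 m2 (by norm_num : (0:ℝ) ≤ 1/2) (by norm_num : (0:ℝ) ≤ 1/2) (by norm_num)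
    have keyeq : ((1/2:ℝ)•((z, coup X z) : (X × StrongDual ℝ X) × ℝ)
        + (1/2:ℝ)•((w, coup X w) : (X × StrongDual ℝ X) × ℝ))
        = (((1/2:ℝ)•(z+w), (coup X z + coup X w)/2) : (X × StrongDual ℝ X) × ℝ) := by
      refine Prod.ext ?_ ?_
      · simp only [Prod.fst_add, Prod.smul_fst]; module
      · simp only [Prod.snd_add, Prod.smul_snd, smul_eq_mul]; try ring
    rw [keyeq] at mmid
    have hreal : coup X ((1/2:ℝ)•(z+w)) ≤ (coup X z + coup X w)/2 := by
      exact_mod_cast (fge hinf ((1/2:ℝ)•(z+w))).trans mmid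
    have hexp : coup X ((1/2:ℝ)•(z+w)) = (1/4)*(coup X z + z.2 w.1 + w.2 z.1 + coup X w) := by
      rw [coup_smul, coup_add]; ring
    have hgoal : (z.2 - w.2) (z.1 - w.1) = coup X z - z.2 w.1 - w.2 z.1 + coup X w := by
      have e1 : coup X z = z.2 z.1 := rfl
      have e2 : coup X w = w.2 w.1 := rfl
      simp only [ContinuousLinearMap.sub_apply, map_sub, e1, e2]
      ring
    rw [hgoal]
    rw [hexp] at hreal
    linarith
  refine ⟨hmono, fun N hN hMN => Set.Subset.antisymm ?_ hMN⟩
  intro z0 hz0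
  have hrel : ∀ w ∈ Mset X f, 0 ≤ (z0.2 - w.2) (z0.1 - w.1) := fun w hw => hN z0 hz0 w (hMN hw)
  have hge0 := fge hinf z0
  by_contra hne
  have hlt : ((coup X z0:ℝ):EReal) < f z0 := lt_of_le_of_ne hge0 (fun h => hne h.symm)
  obtain ⟨y, hy1, hy2⟩ := er_between hlt
  obtain ⟨ρ, hρ, hball⟩ := Metric.eventually_nhds_iff.1 (hlsc z0 _ hy2)
  set D := ‖z0.1‖ + ‖z0.2‖ with hDdef
  have hyr : coup X z0 < y := by exact_mod_cast hy1
  obtain ⟨δ, hδ1, hδ2, hδpos⟩ : ∃ δ:ℝ, 20*Real.sqrt δ < ρ ∧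
      20*Real.sqrt δ*D + 401*δ < y - coup X z0 ∧ 0 < δ := by
    have t0 : Filter.Tendsto (fun δ:ℝ => Real.sqrt δ) (nhdsWithin 0 (Set.Ioi 0)) (nhds 0) :=
      (Real.continuous_sqrt.tendsto' 0 0 (by simp)).mono_left nhdsWithin_le_nhds
    have t1 : Filter.Tendsto (fun δ:ℝ => 20*Real.sqrt δ) (nhdsWithin 0 (Set.Ioi 0)) (nhds 0) := by
      simpa using t0.const_mul 20
    have tid : Filter.Tendsto (fun δ:ℝ => δ) (nhdsWithin 0 (Set.Ioi 0)) (nhds 0) :=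
      Filter.tendsto_id.mono_left nhdsWithin_le_nhds
    have t2 : Filter.Tendsto (fun δ:ℝ => 20*Real.sqrt δ*D + 401*δ)
        (nhdsWithin 0 (Set.Ioi 0)) (nhds 0) := by
      simpa using (t1.mul_const D).add (tid.const_mul 401)
    have e1 := t1.eventually_lt_const hρ
    have e2 := t2.eventually_lt_const (by linarith : (0:ℝ) < y - coup X z0)
    obtain ⟨δ, hh, hmem⟩ := ((e1.and e2).and self_mem_nhdsWithin).exists
    exact ⟨δ, hh.1, hh.2, hmem⟩
  obtain ⟨w, hw1, hw2, hwf⟩ := approx hconv hlsc hinf z0 hrel hδpos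
  have hdist : dist (z0+w) z0 < ρ := by
    rw [dist_comm, dist_self_add_right, Prod.norm_def]
    exact lt_of_le_of_lt (max_le hw1 hw2) hδ1
  have hylt : ((y:ℝ):EReal) < f (z0+w) := hball hdist
  have hreal2 : y < coup X (z0+w) + δ := by exact_mod_cast hylt.trans_le hwf
  have hexp := coup_add z0 w
  have hb1 : z0.2 w.1 ≤ ‖z0.2‖*(20*Real.sqrt δ) :=
    (habs' z0.2 w.1).trans (mul_le_mul_of_nonneg_left hw1 (norm_nonneg _))
  have hb2 : w.2 z0.1 ≤ (20*Real.sqrt δ)*‖z0.1‖ := by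
    refine (habs' w.2 z0.1).trans ?_
    exact mul_le_mul_of_nonneg_right hw2 (norm_nonneg _)
  have hb3 : coup X w ≤ (20*Real.sqrt δ)*(20*Real.sqrt δ) := by
    have e2 : coup X w = w.2 w.1 := rfl
    rw [e2]
    exact (habs' w.2 w.1).trans (mul_le_mul hw2 hw1 (norm_nonneg _) (by positivity))
  have hsq : Real.sqrt δ * Real.sqrt δ = δ := Real.mul_self_sqrt hδpos.le
  have h400 : (20*Real.sqrt δ)*(20*Real.sqrt δ) = 400*δ := by
    rw [show (20*Real.sqrt δ)*(20*Real.sqrt δ) = 400*(Real.sqrt δ*Real.sqrt δ) by ring, hsq]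
  rw [hDdef] at hδ2
  nlinarith [hreal2, hexp, hb1, hb2, hb3]

end AuxC
section AuxD
open Filter Topology
section Gen

variable {Y : Type*} [NormedAddCommGroup Y] [NormedSpace ℝ Y]

lemma gabs (g : Y →L[ℝ] ℝ) (x : Y) : -(‖g‖*‖x‖) ≤ g x := by
  have h1 : |g x| ≤ ‖g‖*‖x‖ := by rw [← Real.norm_eq_abs]; exact g.le_opNorm x
  linarith [(abs_le.1 h1).1]

lemma attain (u : Y →L[ℝ] ℝ) {ε : ℝ} (hε : 0 < ε) :
    ∃ y : Y, ‖u‖^2/2 - ε < u y - ‖y‖^2/2 := by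
  rcases eq_or_lt_of_le (norm_nonneg u) with h0 | hn
  · refine ⟨0, ?_⟩
    simp [← h0]
    linarith
  · set δ := min (‖u‖/2) (ε/(2*‖u‖)) with hδdef
    have hδpos : 0 < δ := lt_min (by linarith) (by positivity)
    have hδu : δ ≤ ‖u‖/2 := min_le_left _ _
    have hδε : δ*‖u‖ ≤ ε/2 := by
      have h1 : δ ≤ ε/(2*‖u‖) := min_le_right _ _
      have h2 := mul_le_mul_of_nonneg_right h1 (norm_nonneg u)
      rw [div_mul_eq_mul_div, mul_comm 2 ‖u‖] at h2
      calc δ*‖u‖ ≤ ε*‖u‖/(‖u‖*2) := h2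
      _ = ε/2 := by field_simp
    have hM : ¬ (‖u‖ ≤ ‖u‖ - δ) := by linarith
    rw [ContinuousLinearMap.opNorm_le_iff (by linarith : (0:ℝ) ≤ ‖u‖ - δ)] at hM
    push_neg at hM
    obtain ⟨x, hx⟩ := hM
    have hxne : x ≠ 0 := by
      intro h; rw [h] at hx; simp at hx
    have hxpos : 0 < ‖x‖ := norm_pos_iff.2 hxne
    set c := ‖u‖/‖x‖ with hcdef
    have hcpos : 0 < c := by positivity
    have habs : (‖u‖-δ)*‖x‖ < |u x| := by rwa [Real.norm_eq_abs] at hx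
    rcases le_or_gt 0 (u x) with hsgn | hsgn
    · refine ⟨c • x, ?_⟩
      have h1 : u (c • x) = c * u x := by rw [map_smul]; rfl
      have h2 : ‖c • x‖ = ‖u‖ := by
        rw [norm_smul, Real.norm_eq_abs, abs_of_pos hcpos, hcdef]; field_simp
      have h3 : c * u x > c * ((‖u‖-δ)*‖x‖) := by
        apply mul_lt_mul_of_pos_left _ hcpos
        rwa [abs_of_nonneg hsgn] at habs
      have h4 : c * ((‖u‖-δ)*‖x‖) = (‖u‖-δ)*‖u‖ := by rw [hcdef]; field_simp
      rw [h1, h2]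
      nlinarith
    · refine ⟨-(c • x), ?_⟩
      have h1 : u (-(c • x)) = -(c * u x) := by rw [map_neg, map_smul]; rfl
      have h2 : ‖-(c • x)‖ = ‖u‖ := by
        rw [norm_neg, norm_smul, Real.norm_eq_abs, abs_of_pos hcpos, hcdef]; field_simp
      have h3 : -(c * u x) > c * ((‖u‖-δ)*‖x‖) := by
        have : (‖u‖-δ)*‖x‖ < -(u x) := by rwa [abs_of_neg hsgn] at habs
        nlinarith
      have h4 : c * ((‖u‖-δ)*‖x‖) = (‖u‖-δ)*‖u‖ := by rw [hcdef]; field_simp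
      rw [h1, h2]
      nlinarith

end Gen

lemma sq_combo {x A B a b : ℝ} (hx0 : 0 ≤ x) (hx : x ≤ a*A + b*B) (ha : 0 ≤ a) (hb : 0 ≤ b)
    (hab : a+b=1) (hA : 0 ≤ A) (hB : 0 ≤ B) : x^2 ≤ a*A^2 + b*B^2 := by
  nlinarith [mul_nonneg (mul_nonneg ha hb) (sq_nonneg (A-B)), mul_nonneg ha hA, mul_nonneg hb hB,
    mul_nonneg (mul_nonneg ha hA) (mul_nonneg hb hB)]

lemma amgm2 (a b : ℝ) : a*b ≤ a^2/2 + b^2/2 := by nlinarith [sq_nonneg (a - b)]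

lemma combo_lt {a b x y m : ℝ} (ha : 0 ≤ a) (hb : 0 ≤ b) (hab : a + b = 1) (hx : x < m)
    (hy : y < m) : a*x + b*y < m := by
  rcases eq_or_lt_of_le ha with h|h
  · have hb1 : b = 1 := by linarith
    rw [← h, hb1]; simpa
  · have hm' : a*m + b*m = m := by rw [← add_mul, hab, one_mul]
    have h1 := mul_lt_mul_of_pos_left hx h
    have h2 := mul_le_mul_of_nonneg_left hy.le hb
    linarith

variable {X : Type*} [NormedAddCommGroup X] [NormedSpace ℝ X]

lemma hfun_combo (w w' : X × StrongDual ℝ X) {a b : ℝ} (ha : 0 ≤ a) (hb : 0 ≤ b) (hab : a + b = 1) :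
    hfun X (a•w + b•w') ≤ a*hfun X w + b*hfun X w' := by
  have n1 : ‖a•w.1 + b•w'.1‖ ≤ a*‖w.1‖ + b*‖w'.1‖ := by
    refine (norm_add_le _ _).trans ?_
    rw [norm_smul, norm_smul, Real.norm_eq_abs, abs_of_nonneg ha, Real.norm_eq_abs,
      abs_of_nonneg hb]
  have n2 : ‖a•w.2 + b•w'.2‖ ≤ a*‖w.2‖ + b*‖w'.2‖ := by
    refine (norm_add_le _ _).trans ?_
    rw [norm_smul, norm_smul, Real.norm_eq_abs, abs_of_nonneg ha, Real.norm_eq_abs,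
      abs_of_nonneg hb]
  have s1 := sq_combo (norm_nonneg _) n1 ha hb hab (norm_nonneg w.1) (norm_nonneg w'.1)
  have s2 := sq_combo (norm_nonneg _) n2 ha hb hab (norm_nonneg w.2) (norm_nonneg w'.2)
  have e0 : hfun X (a•w + b•w') = ‖a•w.1 + b•w'.1‖^2/2 + ‖a•w.2 + b•w'.2‖^2/2 := rfl
  have e1 : hfun X w = ‖w.1‖^2/2 + ‖w.2‖^2/2 := rfl
  have e2 : hfun X w' = ‖w'.1‖^2/2 + ‖w'.2‖^2/2 := rfl
  rw [e0, e1, e2]; linarith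

lemma continuous_hfun : Continuous (hfun X) :=
  (((continuous_norm.comp continuous_fst).pow 2).div_const 2).add
    (((continuous_norm.comp continuous_snd).pow 2).div_const 2)

lemma coup_def (w : X × StrongDual ℝ X) : coup X w = w.2 w.1 := rfl

lemma coupS_def (p : StrongDual ℝ X × StrongDual ℝ (StrongDual ℝ X)) : coupS X p = p.2 p.1 := rfl

variable {g : X × StrongDual ℝ X → EReal}

lemma sep_contra (hbot : ∀ z, g z ≠ ⊥) (hproper : ∃ z, g z ≠ ⊤)
    (hconv : Convex ℝ {p : (X × StrongDual ℝ X) × ℝ | g p.1 ≤ ((p.2:ℝ):EReal)})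
    (hstar : ∀ p, ((coupS X p : ℝ) : EReal) ≤ conjF X g p)
    (z : X × StrongDual ℝ X) {m : ℝ} (hm : 0 < m)
    (hall : ∀ w, ((m:ℝ):EReal) ≤ g (z + w) - ((coup X (z + w) : ℝ) : EReal)
      + ((coup X w : ℝ) : EReal) + ((hfun X w : ℝ) : EReal)) : False := by
  classical
  set U : Set ((X × StrongDual ℝ X) × ℝ) := {p | p.2 + hfun X p.1 < m} with hUdef
  set E : Set ((X × StrongDual ℝ X) × ℝ) :=
    {p | g (z + p.1) ≤ ((p.2 + coup X (z + p.1) - coup X p.1 : ℝ):EReal)} with hEdef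
  have hUo : IsOpen U :=
    isOpen_lt (continuous_snd.add (continuous_hfun.comp continuous_fst)) continuous_const
  have hUc : Convex ℝ U := by
    intro p hp p' hp' a b ha hb hab
    have hcvx := hfun_combo p.1 p'.1 ha hb hab
    have hmem : a*(p.2 + hfun X p.1) + b*(p'.2 + hfun X p'.1) < m := combo_lt ha hb hab hp hp'
    show (a•p + b•p').2 + hfun X (a•p + b•p').1 < m
    have c1 : (a•p + b•p').1 = a•p.1 + b•p'.1 := rfl
    have c2 : (a•p + b•p').2 = a*p.2 + b*p'.2 := rfl
    rw [c1, c2]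
    nlinarith
  have hEc : Convex ℝ E := by
    intro p hp p' hp' a b ha hb hab
    have m1 : ((z + p.1, p.2 + coup X (z+p.1) - coup X p.1) : (X × StrongDual ℝ X) × ℝ)
        ∈ {q : (X × StrongDual ℝ X) × ℝ | g q.1 ≤ ((q.2:ℝ):EReal)} := hp
    have m2 : ((z + p'.1, p'.2 + coup X (z+p'.1) - coup X p'.1) : (X × StrongDual ℝ X) × ℝ)
        ∈ {q : (X × StrongDual ℝ X) × ℝ | g q.1 ≤ ((q.2:ℝ):EReal)} := hp'
    have hc := hconv m1 m2 ha hb hab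
    have keyeq : a•((z + p.1, p.2 + coup X (z+p.1) - coup X p.1) : (X × StrongDual ℝ X) × ℝ)
        + b•((z + p'.1, p'.2 + coup X (z+p'.1) - coup X p'.1) : (X × StrongDual ℝ X) × ℝ)
        = ((z + (a•p.1 + b•p'.1),
            a*(p.2 + coup X (z+p.1) - coup X p.1) + b*(p'.2 + coup X (z+p'.1) - coup X p'.1)) :
            (X × StrongDual ℝ X) × ℝ) := by
      refine Prod.ext ?_ ?_
      · show a•(z+p.1) + b•(z+p'.1) = _
        calc a•(z+p.1) + b•(z+p'.1) = (a+b)•z + (a•p.1 + b•p'.1) := by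
              rw [smul_add, smul_add, add_smul]; abel
        _ = z + (a•p.1 + b•p'.1) := by rw [hab, one_smul]
      · show a*(p.2 + coup X (z+p.1) - coup X p.1) + b*(p'.2 + coup X (z+p'.1) - coup X p'.1) = _
        rfl
    rw [keyeq] at hc
    have eaff : a*(p.2 + coup X (z+p.1) - coup X p.1) + b*(p'.2 + coup X (z+p'.1) - coup X p'.1)
        = (a*p.2 + b*p'.2) + coup X (z + (a•p.1 + b•p'.1)) - coup X (a•p.1 + b•p'.1) := by
      rw [coup_add, coup_add, coup_add]
      simp only [Prod.fst_add, Prod.smul_fst, Prod.snd_add, Prod.smul_snd, map_add, map_smul,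
        ContinuousLinearMap.add_apply, ContinuousLinearMap.smul_apply, smul_eq_mul]
      linear_combination (coup X z) * hab
    have hc' : g (z + (a•p.1 + b•p'.1))
        ≤ (((a*p.2 + b*p'.2) + coup X (z + (a•p.1 + b•p'.1)) - coup X (a•p.1 + b•p'.1) : ℝ):EReal) := by
      have := hc
      rw [Set.mem_setOf_eq] at this
      rw [← eaff]
      exact this
    exact hc'
  have hdisj : Disjoint U E := by
    rw [Set.disjoint_left]
    intro p hpU hpE
    have h1 := hall p.1
    have h2 : g (z + p.1) - ((coup X (z+p.1) : ℝ):EReal) + ((coup X p.1 : ℝ):EReal)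
        + ((hfun X p.1 : ℝ):EReal) ≤ ((p.2 + hfun X p.1 : ℝ):EReal) := by
      rw [er_shift, er_add_le]
      have e : p.2 + hfun X p.1 - (coup X p.1 + hfun X p.1 - coup X (z+p.1))
          = p.2 + coup X (z+p.1) - coup X p.1 := by ring
      rw [e]
      exact hpE
    have h3 : m ≤ p.2 + hfun X p.1 := by exact_mod_cast h1.trans h2
    have h4 : p.2 + hfun X p.1 < m := hpU
    linarith
  obtain ⟨φ, u, hUlt, hEge⟩ := geometric_hahn_banach_open hUc hUo hEc hdisj
  -- E nonempty witness
  obtain ⟨v0, hv0⟩ := hproper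
  obtain ⟨r0, hr0⟩ : ∃ r:ℝ, g v0 = (r:EReal) := ⟨(g v0).toReal, (EReal.coe_toReal hv0 (hbot v0)).symm⟩
  have hz0 : z + (v0 - z) = v0 := by abel
  have hE0 : ((v0 - z, r0 - coup X v0 + coup X (v0-z)) : (X × StrongDual ℝ X) × ℝ) ∈ E := by
    show g (z + (v0-z)) ≤ _
    rw [hz0, hr0]
    exact_mod_cast le_of_eq (by ring)
  set s := φ ((0 : X × StrongDual ℝ X), (1:ℝ)) with hsdef
  have hdecomp : ∀ (w : X × StrongDual ℝ X) (t : ℝ), φ (w, t) = φ (w, 0) + t * s := by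
    intro w t
    have e : ((w,t) : (X × StrongDual ℝ X) × ℝ) = (w,(0:ℝ)) + t•((0 : X × StrongDual ℝ X),(1:ℝ)) := by
      refine Prod.ext ?_ ?_ <;> simp
    rw [e, map_add, map_smul, smul_eq_mul, hsdef]
  have hUm : ∀ (w : X × StrongDual ℝ X) (τ : ℝ), 0 < τ → φ (w, 0) + (m - hfun X w - τ) * s < u := by
    intro w τ hτ
    have hUmem : ((w, m - hfun X w - τ) : (X × StrongDual ℝ X) × ℝ) ∈ U := by
      show m - hfun X w - τ + hfun X w < m
      linarith
    have := hUlt _ hUmem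
    rwa [hdecomp] at this
  have hs0 : 0 ≤ s := by
    by_contra hneg
    push_neg at hneg
    have h00 : φ ((0 : X × StrongDual ℝ X), (0:ℝ)) = 0 := by
      have e : (((0 : X × StrongDual ℝ X), (0:ℝ)) : (X × StrongDual ℝ X) × ℝ) = 0 := rfl
      rw [e, map_zero]
    set τ := max 1 (m - hfun X (0 : X × StrongDual ℝ X) - (u+1)/s) with hτdef
    have hτpos : (0:ℝ) < τ := lt_of_lt_of_le one_pos (le_max_left _ _)
    have h1 := hUm 0 τ hτpos
    rw [h00, zero_add] at h1
    have h2 : m - hfun X (0 : X × StrongDual ℝ X) - τ ≤ (u+1)/s := by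
      have := le_max_right 1 (m - hfun X (0 : X × StrongDual ℝ X) - (u+1)/s)
      linarith
    have h3 : u + 1 ≤ (m - hfun X (0 : X × StrongDual ℝ X) - τ)*s := by
      have hh := mul_le_mul_of_nonpos_left h2 hneg.le
      have e : s*((u+1)/s) = u+1 := by
        rw [mul_comm]; exact div_mul_cancel₀ _ (ne_of_lt hneg)
      nlinarith
    linarith
  have hsne : s ≠ 0 := by
    intro h0
    have h1 := hUm (v0 - z) 1 one_pos
    rw [h0, mul_zero, add_zero] at h1
    have h2 := hEge _ hE0
    rw [hdecomp, h0, mul_zero, add_zero] at h2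
    linarith
  have hspos : 0 < s := lt_of_le_of_ne hs0 (Ne.symm hsne)
  -- key inequality (i)
  have hI : ∀ w : X × StrongDual ℝ X, φ (w,0) + (m - hfun X w)*s ≤ u := by
    intro w
    by_contra hcon
    push_neg at hcon
    set A := φ (w,0) + (m - hfun X w)*s with hAdef
    have hτ : 0 < (A - u)/s := div_pos (by linarith) hspos
    have h1 := hUm w ((A-u)/s) hτ
    have e : (m - hfun X w - (A-u)/s)*s = (m - hfun X w)*s - (A-u) := by
      rw [sub_mul, div_mul_cancel₀ _ hsne]
    rw [e] at h1
    have : φ (w,0) + ((m - hfun X w)*s - (A-u)) = u := by rw [hAdef]; ring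
    linarith
  -- functionals
  set r : (X × StrongDual ℝ X) →L[ℝ] ℝ := φ.comp (ContinuousLinearMap.inl ℝ (X × StrongDual ℝ X) ℝ) with hrdef
  set q1 : StrongDual ℝ X := (1/s) • (r.comp (ContinuousLinearMap.inl ℝ X (StrongDual ℝ X))) with hq1def
  set q2 : StrongDual ℝ (StrongDual ℝ X) := (1/s) • (r.comp (ContinuousLinearMap.inr ℝ X (StrongDual ℝ X))) with hq2def
  have hq : ∀ w : X × StrongDual ℝ X, φ (w,0) = s*(q1 w.1 + q2 w.2) := by
    intro w
    have e : ((w, (0:ℝ)) : (X × StrongDual ℝ X) × ℝ)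
        = ((w.1, (0:StrongDual ℝ X)), (0:ℝ)) + (((0:X), w.2), (0:ℝ)) := by
      refine Prod.ext ?_ ?_ <;> simp
    have e1 : q1 w.1 = (1/s) * φ ((w.1, (0:StrongDual ℝ X)), (0:ℝ)) := rfl
    have e2 : q2 w.2 = (1/s) * φ (((0:X), w.2), (0:ℝ)) := rfl
    rw [e, map_add, e1, e2]
    field_simp
  have hIk : ∀ w : X × StrongDual ℝ X, q1 w.1 + q2 w.2 + (m - hfun X w) ≤ u/s := by
    intro w
    have h1 := hI w
    rw [hq] at h1
    rw [le_div_iff₀ hspos]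
    nlinarith
  have hIIk : ∀ p ∈ E, u/s ≤ q1 p.1.1 + q2 p.1.2 + p.2 := by
    intro p hp
    have h2 := hEge p hp
    have e : φ p = φ (p.1, p.2) := rfl
    rw [e, hdecomp, hq] at h2
    rw [div_le_iff₀ hspos]
    nlinarith
  -- attainment
  obtain ⟨y1, hy1⟩ := attain q1 (show (0:ℝ) < m/8 by linarith)
  obtain ⟨y2, hy2⟩ := attain q2 (show (0:ℝ) < m/8 by linarith)
  have hA2 : ‖q1‖^2/2 + ‖q2‖^2/2 + (3/4)*m < u/s := by
    have h1 := hIk (y1, y2)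
    have hh : hfun X ((y1,y2) : X × StrongDual ℝ X) = ‖y1‖^2/2 + ‖y2‖^2/2 := rfl
    rw [hh] at h1
    linarith
  -- conjugate bound
  set P : StrongDual ℝ X × StrongDual ℝ (StrongDual ℝ X) := (z.2 - q1, inclusionInDoubleDual ℝ X z.1 - q2) with hPdef
  have hPle := hstar P
  have hlt2 : ((coupS X P - m/4 : ℝ):EReal) < conjF X g P :=
    lt_of_lt_of_le (by exact_mod_cast (by linarith : coupS X P - m/4 < coupS X P)) hPle
  obtain ⟨v, hv⟩ := lt_iSup_iff.1 hlt2
  obtain ⟨gv, hgv⟩ : ∃ c:ℝ, g v = (c:EReal) := by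
    refine ⟨(g v).toReal, (EReal.coe_toReal ?_ (hbot v)).symm⟩
    intro htop
    rw [htop] at hv
    simp at hv
  rw [hgv, ← EReal.coe_sub] at hv
  have hvreal : coupS X P - m/4 < P.1 v.1 + P.2 v.2 - gv := by exact_mod_cast hv
  have hcs : coupS X P = z.2 z.1 - q1 z.1 - q2 z.2 + q2 q1 := by
    rw [coupS_def, hPdef]
    simp only [ContinuousLinearMap.sub_apply, map_sub, NormedSpace.dual_def]
    ring
  have hPv : P.1 v.1 + P.2 v.2 = z.2 v.1 - q1 v.1 + v.2 z.1 - q2 v.2 := by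
    rw [hPdef]
    simp only [ContinuousLinearMap.sub_apply, NormedSpace.dual_def]
    ring
  have hzv : z + (v - z) = v := by abel
  have hE1 : ((v - z, gv - coup X v + coup X (v - z)) : (X × StrongDual ℝ X) × ℝ) ∈ E := by
    show g (z + (v - z)) ≤ _
    rw [hzv, hgv]
    exact_mod_cast le_of_eq (by ring)
  have hII := hIIk _ hE1
  have hcomp1 : ((v - z : X × StrongDual ℝ X)).1 = v.1 - z.1 := rfl
  have hcomp2 : ((v - z : X × StrongDual ℝ X)).2 = v.2 - z.2 := rfl
  rw [hcomp1, hcomp2, map_sub, map_sub] at hII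
  have hcoupvz : coup X (v - z) = v.2 v.1 - v.2 z.1 - z.2 v.1 + z.2 z.1 := by
    rw [coup_def, hcomp1, hcomp2]
    simp only [ContinuousLinearMap.sub_apply, map_sub]
    ring
  have hcoupv : coup X v = v.2 v.1 := coup_def v
  rw [hcoupvz, hcoupv] at hII
  rw [hcs, hPv] at hvreal
  have hq2q1 : -(‖q2‖*‖q1‖) ≤ q2 q1 := gabs q2 q1
  have hamgm : ‖q2‖*‖q1‖ ≤ ‖q2‖^2/2 + ‖q1‖^2/2 := amgm2 _ _
  linarith

lemma hinf_of_Gs (hbot : ∀ z, g z ≠ ⊥) (hproper : ∃ z, g z ≠ ⊤)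
    (hconv : Convex ℝ {p : (X × StrongDual ℝ X) × ℝ | g p.1 ≤ ((p.2:ℝ):EReal)})
    (hgec : ∀ z, ((coup X z : ℝ):EReal) ≤ g z)
    (hstar : ∀ p, ((coupS X p : ℝ) : EReal) ≤ conjF X g p) : HInf g := by
  intro z
  refine le_antisymm ?_ ?_
  · by_contra hcon
    push_neg at hcon
    have hcon' : ((0:ℝ):EReal) < ⨅ w : X × StrongDual ℝ X,
        (g (z + w) - ((coup X (z + w) : ℝ) : EReal) + ((coup X w : ℝ) : EReal)
          + ((hfun X w : ℝ) : EReal)) := by exact_mod_cast hcon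
    obtain ⟨m, hm1, hm2⟩ := er_between hcon'
    have hm : (0:ℝ) < m := by exact_mod_cast hm1
    exact sep_contra hbot hproper hconv hstar z hm
      (fun w => (hm2.trans_le (iInf_le _ w)).le)
  · refine le_iInf fun w => ?_
    rw [er_shift]
    have h1 : ((coup X (z+w) :ℝ):EReal) + ((coup X w + hfun X w - coup X (z+w) : ℝ):EReal)
        ≤ g (z+w) + ((coup X w + hfun X w - coup X (z+w) : ℝ):EReal) :=
      add_le_add (hgec (z+w)) le_rfl
    have h2 : ((coup X (z+w) :ℝ):EReal) + ((coup X w + hfun X w - coup X (z+w) : ℝ):EReal)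
        = ((coup X w + hfun X w : ℝ):EReal) := by
      rw [← EReal.coe_add]
      norm_cast
      ring
    have h3 : (0:EReal) ≤ ((coup X w + hfun X w : ℝ):EReal) := by
      exact_mod_cast coup_add_hfun_nonneg w
    calc (0:EReal) ≤ ((coup X w + hfun X w : ℝ):EReal) := h3
    _ = _ := h2.symm
    _ ≤ _ := h1

end AuxD

/-- if `f : Z → ℝ ∪ {+∞}` is proper, convex, norm-lsc, and
`inf_w (f_z(w) + h(w)) = 0` for every `z ∈ Z`, then `M_f` is maximal monotone.
In particular, every strongly representable operator is maximal monotone. -/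
theorem stmt9 {X : Type*} [NormedAddCommGroup X] [NormedSpace ℝ X] [CompleteSpace X]
    (f : X × StrongDual ℝ X → EReal)
    (hne_bot : ∀ z, f z ≠ ⊥) (hproper : ∃ z, f z ≠ ⊤)
    (hconv : Convex ℝ {p : (X × StrongDual ℝ X) × ℝ | f p.1 ≤ (p.2 : EReal)})
    (hlsc : LowerSemicontinuous f)
    (hinf : ∀ z : X × StrongDual ℝ X,
      (⨅ w : X × StrongDual ℝ X,
        (f (z + w) - ((coup X (z + w) : ℝ) : EReal) + ((coup X w : ℝ) : EReal)
          + ((hfun X w : ℝ) : EReal))) = 0) :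
    IsMaxMono X (Mset X f) ∧
    ∀ M : Set (X × StrongDual ℝ X), (∃ g, memGs X g ∧ M = Mset X g) → IsMaxMono X M := by
  constructor
  · exact keyA hconv hlsc hinf
  · rintro M ⟨g, ⟨hb, hp, hc, hgec, hstar, hl⟩, rfl⟩
    exact keyA hc hl (hinf_of_Gs hb hp hc hgec hstar)
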